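/- Let k be a perfect field of prime characteristic p, S = k[[x_1,…,x_n]], and q = p^e with e ≥ 1. Let h ∈ S and write h = Σ_a (h_a)^q · x^a, where a = (a_1,…,a_n) ranges over exponent vectors with 0 ≤ a_i ≤ q−1, x^a = x_1^{a_1}⋯x_n^{a_n}, and h_a ∈ S (such a decomposition exists since k is perfect). Then the ideal generated by the elements h_a is the smallest ideal whose q-th Frobenius power contains h: h belongs to ((h_a : a))^{[q]}, and for every ideal J of S with h ∈ J^{[q]}, each h_a belongs to J. In other words, I_e((h)) = (h_a : a). -/

import Mathlib

/-- The `q`-th Frobenius power `I^{[q]}` of an ideal `I`: the ideal generated by the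
`q`-th powers of the elements of `I`. -/
def frobeniusPower {R : Type*} [CommRing R] (I : Ideal R) (q : ℕ) : Ideal R :=
  Ideal.span ((fun a => a ^ q) '' (I : Set R))


namespace RI

open MvPowerSeries Finsupp

variable {k : Type*} [Field k] {p : ℕ} [Fact p.Prime] [CharP k p] {n : ℕ}

instance : CharP (MvPowerSeries (Fin n) k) p :=
  charP_of_injective_ringHom (f := (MvPowerSeries.C : k →+* MvPowerSeries (Fin n) k))
    (fun a b hab => by simpa using congrArg ((MvPowerSeries.constantCoeff : MvPowerSeries (Fin n) k →+* k)) hab) p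

instance : CharP (MvPolynomial (Fin n) k) p :=
  charP_of_injective_ringHom (f := (MvPolynomial.C : k →+* MvPolynomial (Fin n) k))
    (MvPolynomial.C_injective _ _) p

lemma smul_inj (e : ℕ) {a b : Fin n →₀ ℕ} (h : p ^ e • a = p ^ e • b) : a = b := by
  ext i
  have hi := congrArg (fun f => f i) h
  simp only [Finsupp.smul_apply, smul_eq_mul] at hi
  exact Nat.eq_of_mul_eq_mul_left (pow_pos (Nat.Prime.pos Fact.out) e) hi

lemma poly_coeff_pow (e : ℕ) (P : MvPolynomial (Fin n) k) (m : Fin n →₀ ℕ) :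
    MvPolynomial.coeff (p ^ e • m) (P ^ p ^ e) = MvPolynomial.coeff m P ^ p ^ e := by
  conv_lhs => rw [P.as_sum, sum_pow_char_pow]
  simp_rw [MvPolynomial.monomial_pow]
  rw [MvPolynomial.coeff_sum, Finset.sum_eq_single m]
  · rw [MvPolynomial.coeff_monomial, if_pos rfl]
  · intro b _ hb
    rw [MvPolynomial.coeff_monomial, if_neg (fun hc => hb (smul_inj e hc))]
  · intro hm
    rw [MvPolynomial.coeff_monomial, if_pos rfl, MvPolynomial.notMem_support_iff.mp hm,
      zero_pow (pow_ne_zero e (Nat.Prime.ne_zero Fact.out))]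

lemma poly_coeff_pow_zero (e : ℕ) (P : MvPolynomial (Fin n) k) (m : Fin n →₀ ℕ)
    (hm : ∀ m₀ : Fin n →₀ ℕ, m ≠ p ^ e • m₀) :
    MvPolynomial.coeff m (P ^ p ^ e) = 0 := by
  conv_lhs => rw [P.as_sum, sum_pow_char_pow]
  simp_rw [MvPolynomial.monomial_pow]
  rw [MvPolynomial.coeff_sum]
  refine Finset.sum_eq_zero fun v _ => ?_
  rw [MvPolynomial.coeff_monomial, if_neg (fun hc => hm v hc.symm)]

lemma coeff_mul_eq_zero (g h : MvPowerSeries (Fin n) k) (m : Fin n →₀ ℕ)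
    (hg : ∀ a ≤ m, MvPowerSeries.coeff a g = 0) :
    MvPowerSeries.coeff m (g * h) = 0 := by
  rw [MvPowerSeries.coeff_mul]
  refine Finset.sum_eq_zero fun x hx => ?_
  rw [Finset.HasAntidiagonal.mem_antidiagonal] at hx
  rw [hg x.1 (by rw [← hx]; exact le_self_add), zero_mul]

/-- Truncation of `f` below `M` as a polynomial. -/
noncomputable def truncP (f : MvPowerSeries (Fin n) k) (M : Fin n →₀ ℕ) :
    MvPolynomial (Fin n) k :=
  ∑ d ∈ Finset.Iic M, MvPolynomial.monomial d (MvPowerSeries.coeff d f)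

lemma coeff_truncP (f : MvPowerSeries (Fin n) k) (M : Fin n →₀ ℕ) {d : Fin n →₀ ℕ}
    (hd : d ≤ M) : MvPolynomial.coeff d (truncP f M) = MvPowerSeries.coeff d f := by
  rw [truncP, MvPolynomial.coeff_sum, Finset.sum_eq_single d]
  · rw [MvPolynomial.coeff_monomial, if_pos rfl]
  · intro b _ hb; rw [MvPolynomial.coeff_monomial, if_neg hb]
  · intro hd'; exact absurd (Finset.mem_Iic.mpr hd) hd'

lemma coeff_split (e : ℕ) (f : MvPowerSeries (Fin n) k) (M : Fin n →₀ ℕ) :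
    MvPowerSeries.coeff M (f ^ p ^ e) =
      MvPolynomial.coeff M ((truncP f M) ^ p ^ e) := by
  set P := truncP f M with hP
  have hsplit : f ^ p ^ e =
      (P : MvPowerSeries (Fin n) k) ^ p ^ e + (f - P) ^ p ^ e := by
    rw [← add_pow_char_pow, add_sub_cancel]
  have hq1 : p ^ e = (p ^ e - 1) + 1 :=
    (Nat.succ_pred_eq_of_pos (pow_pos (Nat.Prime.pos Fact.out) e)).symm
  have hzero : MvPowerSeries.coeff M ((f - (P : MvPowerSeries (Fin n) k)) ^ p ^ e) = 0 := by
    rw [hq1, pow_succ']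
    refine coeff_mul_eq_zero _ _ _ fun a ha => ?_
    rw [map_sub, MvPolynomial.coeff_coe, coeff_truncP f M ha, sub_self]
  rw [hsplit, map_add, hzero, add_zero, ← MvPolynomial.coe_pow, MvPolynomial.coeff_coe]

lemma coeff_pow (e : ℕ) (f : MvPowerSeries (Fin n) k) (m : Fin n →₀ ℕ) :
    MvPowerSeries.coeff (p ^ e • m) (f ^ p ^ e) = MvPowerSeries.coeff m f ^ p ^ e := by
  have hle : m ≤ p ^ e • m := by
    rw [Finsupp.le_def]
    intro i
    rw [Finsupp.smul_apply, smul_eq_mul]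
    exact Nat.le_mul_of_pos_left _ (pow_pos (Nat.Prime.pos Fact.out) e)
  rw [coeff_split e f, poly_coeff_pow, coeff_truncP f _ hle]

lemma coeff_pow_zero (e : ℕ) (f : MvPowerSeries (Fin n) k) (m : Fin n →₀ ℕ)
    (hm : ∀ m₀ : Fin n →₀ ℕ, m ≠ p ^ e • m₀) :
    MvPowerSeries.coeff m (f ^ p ^ e) = 0 := by
  rw [coeff_split e f, poly_coeff_pow_zero e _ m hm]


/-- The exponent finsupp attached to a bounded exponent vector. -/
noncomputable def D {n q : ℕ} (b : Fin n → Fin q) : Fin n →₀ ℕ :=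
  Finsupp.equivFunOnFinite.symm fun i => (b i : ℕ)

lemma D_apply {q : ℕ} (b : Fin n → Fin q) (i : Fin n) : D b i = b i := rfl

lemma prodX {q : ℕ} (b : Fin n → Fin q) :
    (∏ i : Fin n, (MvPowerSeries.X i : MvPowerSeries (Fin n) k) ^ (b i : ℕ)) =
      MvPowerSeries.monomial (D b) 1 := by
  simp_rw [MvPowerSeries.X_pow_eq]
  have key : ∀ s : Finset (Fin n),
      (∏ i ∈ s, MvPowerSeries.monomial (Finsupp.single i (b i : ℕ)) (1 : k)) =
        MvPowerSeries.monomial (∑ i ∈ s, Finsupp.single i (b i : ℕ)) 1 := by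
    intro s
    induction s using Finset.induction with
    | empty => simp [MvPowerSeries.monomial_zero_one]
    | insert _ _ h ih =>
        rw [Finset.prod_insert h, Finset.sum_insert h, ih,
          MvPowerSeries.monomial_mul_monomial, one_mul]
  rw [key, show (∑ i : Fin n, Finsupp.single i (b i : ℕ)) = D b from by
    ext i; simp [Finsupp.single_apply, D]]

lemma key (e : ℕ) (u : (Fin n → Fin (p ^ e)) → MvPowerSeries (Fin n) k)
    (a : Fin n → Fin (p ^ e)) (m : Fin n →₀ ℕ) :
    MvPowerSeries.coeff (p ^ e • m + D a)
      (∑ b : Fin n → Fin (p ^ e), u b ^ p ^ e * MvPowerSeries.monomial (D b) 1) =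
      MvPowerSeries.coeff m (u a) ^ p ^ e := by
  rw [map_sum, Finset.sum_eq_single a]
  · rw [MvPowerSeries.coeff_mul_monomial, if_pos le_add_self, add_tsub_cancel_right,
      coeff_pow, mul_one]
  · intro b _ hb
    rw [MvPowerSeries.coeff_mul_monomial]
    split_ifs with hle
    · rw [coeff_pow_zero e _ _ ?_, zero_mul]
      intro m₀ hm₀
      apply hb
      have heq : p ^ e • m + D a = p ^ e • m₀ + D b :=
        (tsub_eq_iff_eq_add_of_le hle).mp hm₀
      funext i
      refine Fin.ext ?_
      have hi := congrArg (fun f => f i) heq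
      simp only [Finsupp.add_apply, Finsupp.smul_apply, smul_eq_mul, D_apply] at hi
      have h1 : (a i : ℕ) = (p ^ e * m i + (a i : ℕ)) % p ^ e := by
        rw [Nat.mul_add_mod, Nat.mod_eq_of_lt (a i).isLt]
      rw [hi, Nat.mul_add_mod, Nat.mod_eq_of_lt (b i).isLt] at h1
      exact h1.symm
    · rfl
  · exact fun ha => absurd (Finset.mem_univ a) ha

variable [PerfectRing k p]

/-- Canonical decomposition pieces of a power series. -/
noncomputable def dec (e : ℕ) (f : MvPowerSeries (Fin n) k) (a : Fin n → Fin (p ^ e)) :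
    MvPowerSeries (Fin n) k :=
  fun m => (iterateFrobeniusEquiv k p e).symm (MvPowerSeries.coeff (p ^ e • m + D a) f)

lemma dec_spec (e : ℕ) (f : MvPowerSeries (Fin n) k) :
    f = ∑ a : Fin n → Fin (p ^ e),
      dec e f a ^ p ^ e * MvPowerSeries.monomial (D a) 1 := by
  ext m
  have hq0 : 0 < p ^ e := pow_pos (Nat.Prime.pos Fact.out) e
  set r : Fin n → Fin (p ^ e) := fun i => ⟨m i % p ^ e, Nat.mod_lt _ hq0⟩ with hr
  have hm : m = p ^ e • Finsupp.equivFunOnFinite.symm (fun i => m i / p ^ e) + D r := by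
    ext i
    simp only [Finsupp.add_apply, Finsupp.smul_apply, smul_eq_mul, D_apply]
    rw [show ((Finsupp.equivFunOnFinite.symm fun i => m i / p ^ e : Fin n →₀ ℕ) : Fin n → ℕ) i
      = m i / p ^ e from rfl]
    exact (Nat.div_add_mod (m i) (p ^ e)).symm
  rw [hm, key]
  have : MvPowerSeries.coeff (Finsupp.equivFunOnFinite.symm fun i => m i / p ^ e) (dec e f r)
      = (iterateFrobeniusEquiv k p e).symm
          (MvPowerSeries.coeff
            (p ^ e • (Finsupp.equivFunOnFinite.symm fun i => m i / p ^ e) + D r) f) := rfl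
  rw [this, ← iterateFrobeniusEquiv_def k p, RingEquiv.apply_symm_apply]

lemma uniq (e : ℕ) (u v : (Fin n → Fin (p ^ e)) → MvPowerSeries (Fin n) k)
    (h : (∑ b : Fin n → Fin (p ^ e), u b ^ p ^ e * MvPowerSeries.monomial (D b) 1) =
         (∑ b : Fin n → Fin (p ^ e), v b ^ p ^ e * MvPowerSeries.monomial (D b) 1))
    (a : Fin n → Fin (p ^ e)) : u a = v a := by
  ext m
  have h2 := congrArg (MvPowerSeries.coeff (p ^ e • m + D a)) h
  rw [key, key] at h2
  exact (bijective_iterateFrobenius k p e).injective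
    (by rw [iterateFrobenius_def, iterateFrobenius_def]; exact h2)

end RI

/-- **Blickle–Katzman.** If `h = Σ_a (h_a)^q x^a`, where `a` runs over the
exponent vectors with `0 ≤ aᵢ ≤ q−1`, then the ideal generated by the `h_a` is the smallest
ideal whose `q`-th Frobenius power contains `h`: `I_e((h)) = (h_a : a)`. -/
theorem root_ideal_of_element {k : Type*} [Field k] (p : ℕ) [Fact p.Prime]
    [CharP k p] [PerfectRing k p] (n : ℕ) (e q : ℕ) (he : 1 ≤ e) (hq : q = p ^ e)
    (h : MvPowerSeries (Fin n) k)
    (h_ : (Fin n → Fin q) → MvPowerSeries (Fin n) k)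
    (hdecomp : h = ∑ a : Fin n → Fin q,
      (h_ a) ^ q * ∏ i : Fin n, (MvPowerSeries.X i : MvPowerSeries (Fin n) k) ^ (a i : ℕ)) :
    h ∈ frobeniusPower (Ideal.span (Set.range h_)) q ∧
      ∀ J : Ideal (MvPowerSeries (Fin n) k), h ∈ frobeniusPower J q →
        ∀ a : Fin n → Fin q, h_ a ∈ J := by
  subst hq
  have hdecomp' : h = ∑ a : Fin n → Fin (p ^ e),
      h_ a ^ p ^ e * MvPowerSeries.monomial (RI.D a) 1 := by
    rw [hdecomp]
    exact Finset.sum_congr rfl fun a _ => by rw [RI.prodX]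
  constructor
  · rw [hdecomp]
    refine Ideal.sum_mem _ fun a _ => Ideal.mul_mem_right _ _ ?_
    exact Ideal.subset_span ⟨h_ a, Ideal.subset_span ⟨a, rfl⟩, rfl⟩
  · intro J hJ a
    rw [frobeniusPower, Ideal.span] at hJ
    obtain ⟨c, hsupp, hsum⟩ := Submodule.mem_span_set.mp hJ
    classical
    set g : MvPowerSeries (Fin n) k → MvPowerSeries (Fin n) k := fun x =>
      if hx : ∃ y ∈ J, y ^ p ^ e = x then hx.choose else 0 with hg
    have hgdef : ∀ x ∈ c.support, g x ∈ J ∧ g x ^ p ^ e = x := by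
      intro x hx
      obtain ⟨y, hy, hxy⟩ := hsupp hx
      have hex : ∃ y ∈ J, y ^ p ^ e = x := ⟨y, hy, hxy⟩
      rw [hg]
      simp only [dif_pos hex]
      exact ⟨hex.choose_spec.1, hex.choose_spec.2⟩
    set v : (Fin n → Fin (p ^ e)) → MvPowerSeries (Fin n) k := fun b =>
      ∑ x ∈ c.support, RI.dec e (c x) b * g x with hv
    have hhv : h = ∑ b : Fin n → Fin (p ^ e),
        v b ^ p ^ e * MvPowerSeries.monomial (RI.D b) 1 := by
      calc h = ∑ x ∈ c.support, c x * x := by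
              rw [← hsum, Finsupp.sum]; exact Finset.sum_congr rfl fun x _ => smul_eq_mul _ _
        _ = ∑ x ∈ c.support,
              (∑ b : Fin n → Fin (p ^ e),
                RI.dec e (c x) b ^ p ^ e * MvPowerSeries.monomial (RI.D b) 1) * g x ^ p ^ e := by
              refine Finset.sum_congr rfl fun x hx => ?_
              rw [← RI.dec_spec, (hgdef x hx).2]
        _ = ∑ x ∈ c.support, ∑ b : Fin n → Fin (p ^ e),
              RI.dec e (c x) b ^ p ^ e * MvPowerSeries.monomial (RI.D b) 1 * g x ^ p ^ e := by
              simp_rw [Finset.sum_mul]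
        _ = ∑ b : Fin n → Fin (p ^ e), ∑ x ∈ c.support,
              (RI.dec e (c x) b * g x) ^ p ^ e * MvPowerSeries.monomial (RI.D b) 1 := by
              rw [Finset.sum_comm]
              exact Finset.sum_congr rfl fun b _ => Finset.sum_congr rfl fun x _ => by
                rw [mul_pow]; ring
        _ = ∑ b : Fin n → Fin (p ^ e),
              v b ^ p ^ e * MvPowerSeries.monomial (RI.D b) 1 := by
              refine Finset.sum_congr rfl fun b _ => ?_
              rw [hv, ← Finset.sum_mul, sum_pow_char_pow]
    have hav : h_ a = v a := RI.uniq e h_ v (hdecomp'.symm.trans hhv) a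
    rw [hav, hv]
    exact Ideal.sum_mem _ fun x hx => Ideal.mul_mem_left _ _ ((hgdef x hx).1)
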